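/- arXiv:2010.01459 — 2 statements merged into one kernel-verified Lean document; each statement's English description precedes it below -/
import Mathlib

section
/- In a signed graph, if some partition has zero misclassified edges, then the partition of the vertex set into connected components of the subgraph formed by the '+' edges also has zero misclassified edges. -/
/-- In a signed graph `(G, sign)`, if some partition `P` has zero
misclassified edges, then the partition into connected components of the
positive subgraph also has zero misclassified edges. -/
theorem stmt1 {V : Type} (G : SimpleGraph V) (sign : V → V → Bool)
    (hsym : ∀ i j, sign i j = sign j i) {β : Type} (P : V → β)
    (hP : ∀ i j, G.Adj i j →
      ((sign i j = true → P i = P j) ∧ (sign i j = false → P i ≠ P j))) :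
    ∀ i j, G.Adj i j →
      ((sign i j = true →
        (SimpleGraph.fromRel fun a b => G.Adj a b ∧ sign a b = true).connectedComponentMk i
          = (SimpleGraph.fromRel fun a b => G.Adj a b ∧ sign a b = true).connectedComponentMk j)
       ∧ (sign i j = false →
        (SimpleGraph.fromRel fun a b => G.Adj a b ∧ sign a b = true).connectedComponentMk i
          ≠ (SimpleGraph.fromRel fun a b => G.Adj a b ∧ sign a b = true).connectedComponentMk j)) := by
  set H := SimpleGraph.fromRel fun a b => G.Adj a b ∧ sign a b = true with hH
  have key : ∀ {a b : V}, H.Reachable a b → P a = P b := by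
    intro a b hab
    obtain ⟨w⟩ := hab
    induction w with
    | nil => rfl
    | cons h _ ih =>
      rename_i u v _ _
      have huv : P u = P v := by
        rw [hH, SimpleGraph.fromRel_adj] at h
        rcases h.2 with ⟨hadj, hs⟩ | ⟨hadj, hs⟩
        · exact (hP u v hadj).1 hs
        · exact ((hP v u hadj).1 hs).symm
      exact huv.trans ih
  intro i j hij
  constructor
  · intro hs
    exact SimpleGraph.ConnectedComponent.sound
      ⟨SimpleGraph.Walk.cons (by
        rw [hH, SimpleGraph.fromRel_adj]
        exact ⟨hij.ne, Or.inl ⟨hij, hs⟩⟩) SimpleGraph.Walk.nil⟩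
  · intro hs hcomp
    have hr : H.Reachable i j := (SimpleGraph.ConnectedComponent.eq).mp hcomp
    exact (hP i j hij).2 hs (key hr)
end

section
/- Let w be nonnegative edge weights on a graph with total weight 1, and suppose a partition of the n vertices into parts P₁, …, P_k has the property that part P_t contains β_t·n vertices and induces edges of total weight at least γ_t, with the induced edge sets pairwise disjoint. Then for any binary HC tree T in which each P_t is exactly the leaf set of some node, value(T) ≤ n·(1 − Σ_t γ_t + Σ_t β_t γ_t). -/
/-- A rooted binary tree whose leaves are labeled by vertices of `V`. -/
inductive HCTree (V : Type) : Type
  | leaf (v : V) : HCTree V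
  | node (l r : HCTree V) : HCTree V

namespace HCTree

/-- The list of leaves of a binary tree, from left to right. -/
def leaves {V : Type} : HCTree V → List V
  | leaf v => [v]
  | node l r => leaves l ++ leaves r

/-- `lcaSize t i j` is `|T_{ij}|`: the number of leaves of the subtree rooted at
the least common ancestor of leaves `i` and `j` in `t`. -/
def lcaSize {V : Type} [DecidableEq V] : HCTree V → V → V → ℕ
  | leaf _, _, _ => 1
  | node l r, i, j =>
    if i ∈ l.leaves ∧ j ∈ l.leaves then lcaSize l i j
    else if i ∈ r.leaves ∧ j ∈ r.leaves then lcaSize r i j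
    else (node l r).leaves.length

/-- `Subtree s t`: `s` is (the subtree rooted at) a node of `t`. -/
inductive Subtree {V : Type} : HCTree V → HCTree V → Prop
  | refl (t : HCTree V) : Subtree t t
  | left {s l r : HCTree V} : Subtree s l → Subtree s (node l r)
  | right {s l r : HCTree V} : Subtree s r → Subtree s (node l r)

end HCTree

open HCTree

lemma lca_le_len {V : Type} [DecidableEq V] (t : HCTree V) (i j : V) :
    t.lcaSize i j ≤ t.leaves.length := by
  induction t with
  | leaf v => simp [lcaSize, leaves]
  | node l r ihl ihr =>
    simp only [lcaSize]
    split_ifs with h1 h2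
    · exact le_trans ihl (by simp [leaves])
    · exact le_trans ihr (by simp [leaves])
    · exact le_rfl

lemma subtree_sublist {V : Type} {s t : HCTree V} (h : Subtree s t) :
    s.leaves.Sublist t.leaves := by
  induction h with
  | refl => exact List.Sublist.refl _
  | left h ih => exact ih.trans (List.sublist_append_left _ _)
  | right h ih => exact ih.trans (List.sublist_append_right _ _)

lemma lca_le_sub {V : Type} [DecidableEq V] {s t : HCTree V} (h : Subtree s t)
    (hnd : t.leaves.Nodup) {i j : V} (hi : i ∈ s.leaves) (hj : j ∈ s.leaves) :
    t.lcaSize i j ≤ s.leaves.length := by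
  induction h with
  | refl => exact lca_le_len _ i j
  | @left l r h ih =>
    have hil : i ∈ l.leaves := (subtree_sublist h).subset hi
    have hjl : j ∈ l.leaves := (subtree_sublist h).subset hj
    have hnd' : (l.leaves ++ r.leaves).Nodup := hnd
    rw [List.nodup_append] at hnd'
    simp only [lcaSize, if_pos (And.intro hil hjl)]
    exact ih hnd'.1
  | @right l r h ih =>
    have hir : i ∈ r.leaves := (subtree_sublist h).subset hi
    have hjr : j ∈ r.leaves := (subtree_sublist h).subset hj
    have hnd' : (l.leaves ++ r.leaves).Nodup := hnd
    rw [List.nodup_append] at hnd'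
    have hnil : i ∉ l.leaves := fun hil => hnd'.2.2 i hil i hir rfl
    simp only [lcaSize]
    rw [if_neg (fun hc => hnil hc.1), if_pos (And.intro hir hjr)]
    exact ih hnd'.2.1

open HCTree in
/-- If parts `P₁, …, P_k` of the vertex set, each of fractional
size `β_t` and inducing edges of total weight at least `γ_t ≥ 0`, with pairwise
disjoint leaf sets, are each exactly the leaf set of some node of a binary HC
tree `t`, then `value(t) ≤ n·(1 − Σ_t γ_t + Σ_t β_t γ_t)` (with total edge
weight normalized to 1). -/
theorem stmt19 {V : Type} [DecidableEq V] [Fintype V] (w : V → V → ℝ)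
    (hw : ∀ i j, 0 ≤ w i j) (E : Finset (V × V))
    (htotal : ∑ e ∈ E, w e.1 e.2 = 1)
    (k : ℕ) (parts : Fin k → HCTree V) (γ : Fin k → ℝ) (hγ : ∀ i, 0 ≤ γ i)
    (t : HCTree V) (hnodup : t.leaves.Nodup) (hall : ∀ v : V, v ∈ t.leaves)
    (hsub : ∀ i, Subtree (parts i) t)
    (hdisj : ∀ i j : Fin k, i ≠ j →
      ∀ v : V, v ∈ (parts i).leaves → v ∉ (parts j).leaves)
    (hind : ∀ i : Fin k,
      γ i ≤ ∑ e ∈ E.filter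
        (fun e => e.1 ∈ (parts i).leaves ∧ e.2 ∈ (parts i).leaves), w e.1 e.2) :
    ∑ e ∈ E, w e.1 e.2 * (t.lcaSize e.1 e.2 : ℝ)
      ≤ (Fintype.card V : ℝ) *
        (1 - ∑ i : Fin k, γ i
          + ∑ i : Fin k,
              (((parts i).leaves.length : ℝ) / (Fintype.card V : ℝ)) * γ i) := by
  classical
  set n : ℝ := (Fintype.card V : ℝ) with hn
  -- length of t.leaves equals card V
  have hlen : t.leaves.length = Fintype.card V := by
    rw [← List.toFinset_card_of_nodup hnodup]
    congr 1
    apply Finset.eq_univ_iff_forall.mpr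
    intro v; exact List.mem_toFinset.mpr (hall v)
  have hnpos : (0:ℝ) < n := by
    by_contra h
    push_neg at h
    have h0 : Fintype.card V = 0 := by
      have h2 : (0:ℝ) ≤ (Fintype.card V : ℝ) := Nat.cast_nonneg _
      have : (Fintype.card V : ℝ) = 0 := le_antisymm h h2
      exact_mod_cast this
    have hE : E = ∅ := by
      apply Finset.eq_empty_of_forall_notMem
      intro e _
      have : IsEmpty V := Fintype.card_eq_zero_iff.mp h0
      exact this.elim e.1
    rw [hE] at htotal; simp at htotal
  set F : Fin k → Finset (V × V) :=
    fun i => E.filter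
      (fun e => e.1 ∈ (parts i).leaves ∧ e.2 ∈ (parts i).leaves) with hF
  set U : Finset (V × V) := Finset.univ.biUnion F with hU
  have hUE : U ⊆ E := by
    intro e he
    rw [hU, Finset.mem_biUnion] at he
    obtain ⟨i, _, hei⟩ := he
    exact Finset.mem_of_mem_filter e hei
  have hFdisj : ∀ i ∈ (Finset.univ : Finset (Fin k)), ∀ j ∈ Finset.univ,
      i ≠ j → Disjoint (F i) (F j) := by
    intro i _ j _ hij
    rw [Finset.disjoint_left]
    intro e hei hej
    rw [hF, Finset.mem_filter] at hei hej
    exact hdisj i j hij e.1 hei.2.1 hej.2.1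
  have hsplit : ∀ f : V × V → ℝ,
      ∑ e ∈ E, f e = ∑ e ∈ E \ U, f e + ∑ i : Fin k, ∑ e ∈ F i, f e := by
    intro f
    rw [← Finset.sum_biUnion hFdisj, ← hU, Finset.sum_sdiff hUE]
  set W : Fin k → ℝ := fun i => ∑ e ∈ F i, w e.1 e.2 with hW
  have hWγ : ∀ i, γ i ≤ W i := hind
  -- bound on sum over E \ U
  have h1 : ∑ e ∈ E \ U, w e.1 e.2 * (t.lcaSize e.1 e.2 : ℝ)
      ≤ (∑ e ∈ E \ U, w e.1 e.2) * n := by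
    rw [Finset.sum_mul]
    apply Finset.sum_le_sum
    intro e _
    apply mul_le_mul_of_nonneg_left _ (hw e.1 e.2)
    rw [hn, ← hlen]
    exact_mod_cast lca_le_len t e.1 e.2
  -- bound on sum over F i
  have h2 : ∀ i : Fin k, ∑ e ∈ F i, w e.1 e.2 * (t.lcaSize e.1 e.2 : ℝ)
      ≤ ((parts i).leaves.length : ℝ) * W i := by
    intro i
    rw [hW, Finset.mul_sum]
    apply Finset.sum_le_sum
    intro e he
    rw [hF, Finset.mem_filter] at he
    rw [mul_comm (((parts i).leaves.length : ℝ)) _]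
    apply mul_le_mul_of_nonneg_left _ (hw e.1 e.2)
    exact_mod_cast lca_le_sub (hsub i) hnodup he.2.1 he.2.2
  have hsumE : (1:ℝ) = ∑ e ∈ E \ U, w e.1 e.2 + ∑ i : Fin k, W i := by
    rw [← htotal]; exact hsplit _
  have hli : ∀ i : Fin k, ((parts i).leaves.length : ℝ) ≤ n := by
    intro i
    rw [hn, ← hlen]
    exact_mod_cast (subtree_sublist (hsub i)).length_le
  have hkey : ∑ i : Fin k, (n - ((parts i).leaves.length : ℝ)) * γ i
      ≤ ∑ i : Fin k, (n - ((parts i).leaves.length : ℝ)) * W i := by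
    apply Finset.sum_le_sum
    intro i _
    exact mul_le_mul_of_nonneg_left (hWγ i) (by linarith [hli i])
  calc ∑ e ∈ E, w e.1 e.2 * (t.lcaSize e.1 e.2 : ℝ)
      = ∑ e ∈ E \ U, w e.1 e.2 * (t.lcaSize e.1 e.2 : ℝ)
        + ∑ i : Fin k, ∑ e ∈ F i, w e.1 e.2 * (t.lcaSize e.1 e.2 : ℝ) :=
        hsplit _
    _ ≤ (∑ e ∈ E \ U, w e.1 e.2) * n
        + ∑ i : Fin k, ((parts i).leaves.length : ℝ) * W i :=
        add_le_add h1 (Finset.sum_le_sum (fun i _ => h2 i))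
    _ = n - ∑ i : Fin k, (n - ((parts i).leaves.length : ℝ)) * W i := by
        have e1 : ∑ i : Fin k, (n - ((parts i).leaves.length : ℝ)) * W i
            = n * ∑ i : Fin k, W i
              - ∑ i : Fin k, ((parts i).leaves.length : ℝ) * W i := by
          simp only [sub_mul]
          rw [Finset.sum_sub_distrib, Finset.mul_sum]
        have hA : (∑ e ∈ E \ U, w e.1 e.2) = 1 - ∑ i : Fin k, W i := by
          linarith
        rw [e1, hA]; ring
    _ ≤ n - ∑ i : Fin k, (n - ((parts i).leaves.length : ℝ)) * γ i := by
        linarith [hkey]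
    _ = n * (1 - ∑ i : Fin k, γ i
          + ∑ i : Fin k,
              (((parts i).leaves.length : ℝ) / n) * γ i) := by
        have e2 : ∑ i : Fin k, (((parts i).leaves.length : ℝ) / n) * γ i
            = (∑ i : Fin k, ((parts i).leaves.length : ℝ) * γ i) / n := by
          rw [Finset.sum_div]
          exact Finset.sum_congr rfl (fun i _ => by ring)
        have e3 : ∑ i : Fin k, (n - ((parts i).leaves.length : ℝ)) * γ i
            = n * ∑ i : Fin k, γ i
              - ∑ i : Fin k, ((parts i).leaves.length : ℝ) * γ i := by
          simp only [sub_mul]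
          rw [Finset.sum_sub_distrib, Finset.mul_sum]
        rw [e2, e3]
        field_simp
        ring
end
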